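/- Let $(S, \{f_s\}, \{I\})$ be a $(J,\{I\})$-self-similar system with attractor $K$ and no isolated contact point of cells. Then there exists a continuous folding map $\psi : K \to K$ such that $\psi|_{K_s} = (f_s|_K)^{-1}$ for every $s \in S$; i.e., the local inverses $(f_s)^{-1}$ on the cells $K_s$ are consistent on overlaps and glue to a well-defined continuous map. -/

import Mathlib

open Complex Real Set

noncomputable section

abbrev Iso2 := ℂ ≃ₗᵢ[ℝ] ℂ

/-- Rotation about the origin by angle `θ`, as a linear isometry of `ℝ² = ℂ`. -/
def rotIso (θ : ℝ) : Iso2 := rotation (Circle.exp θ)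

/-- Reflection `R_θ` in the line `{(t cos θ, t sin θ) : t ∈ ℝ}` through the origin. -/
def reflIso (θ : ℝ) : Iso2 := rotIso (2 * θ) * Complex.conjLIE

/-- The vertex `p_i` of the regular `J`-gon. -/
def vertex (J : ℕ) (i : ℤ) : ℂ :=
  (1 / Real.cos (π / J)) • Complex.exp ((π / J + 2 * π * i / J - π / 2) * Complex.I)

/-- The boundary segment `b_i` of the regular `J`-gon, joining `p_{i-1}` and `p_i`. -/
def edge (J : ℕ) (i : ℤ) : Set ℂ := segment ℝ (vertex J (i - 1)) (vertex J i)

/-- The (solid) regular `J`-gon `Q_*^{(J)}`. -/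
def polyQ (J : ℕ) : Set ℂ :=
  {z | ∃ t ∈ Icc (0 : ℝ) 1, ∃ i : ℤ, ∃ y ∈ edge J i, z = t • y}

/-- The symmetry group `D_J` of the regular `J`-gon, as a subset of `O(2)`
(the group of linear isometries of the plane). -/
def DJ (J : ℕ) : Set Iso2 := {g | g '' polyQ J = polyQ J}

/-- The rotation group `Rot_J`. -/
def RotJ (J : ℕ) : Set Iso2 := {g | ∃ i : ℤ, g = rotIso (2 * π * i / J)}

/-- `D_J^*`: the subgroup of `O(2)` generated by `D_J` and the reflections
`R_{ρ(i)}` in the lines through the origin parallel to the edges `b_i`. -/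
def DJstar (J : ℕ) : Subgroup Iso2 :=
  Subgroup.closure (DJ J ∪ {g | ∃ i : ℤ, g = reflIso (2 * π * i / J)})

/-- The data of a `(J,G)`-self-similar system. -/
structure SSSystem (J : ℕ) (S : Type) [Fintype S] where
  r : ℝ
  hr0 : 0 < r
  hr1 : r < 1
  φ : S → Iso2
  c : S → ℂ
  G : Subgroup Iso2
  hG : (G : Set Iso2) ⊆ DJ J
  hφ : ∀ s, φ s ∈ DJstar J

namespace SSSystem

variable {J : ℕ} {S : Type} [Fintype S]

/-- The contraction `f_s(x) = r φ_s(x) + c_s`. -/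
def f (σ : SSSystem J S) (s : S) (x : ℂ) : ℂ := σ.r • σ.φ s x + σ.c s

/-- `f_w = f_{w₁} ∘ ⋯ ∘ f_{w_m}` for a word `w = w₁ ⋯ w_m`. -/
def fw (σ : SSSystem J S) (w : List S) : ℂ → ℂ := w.foldr (fun s g => σ.f s ∘ g) id

/-- The polygon `Q_w = f_w(Q_*)`. -/
def Qw (σ : SSSystem J S) (w : List S) : Set ℂ := σ.fw w '' polyQ J

/-- The cell `K_w = f_w(K)`. -/
def Kw (σ : SSSystem J S) (K : Set ℂ) (w : List S) : Set ℂ := σ.fw w '' K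

/-- Edge-adjacency of two letters: the two level-1 cells share a full boundary segment. -/
def E1ℓ (σ : SSSystem J S) (s t : S) : Prop :=
  s ≠ t ∧ ∃ i j : ℤ, σ.Qw [s] ∩ σ.Qw [t] = σ.f s '' edge J i ∧
    σ.f s '' edge J i = σ.f t '' edge J j

/-- The axioms (A1)–(A5) of a `(J,G)`-self-similar system. -/
structure Axioms (σ : SSSystem J S) : Prop where
  mapsIn : ∀ s, σ.f s '' polyQ J ⊆ polyQ J
  a2 : ∀ i : ℤ, ∃ s : S, ∃ j : ℤ, σ.f s '' edge J j ⊆ edge J i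
  a3 : ∀ g ∈ σ.G, ∃ gs : S → S, ∀ s : S, ∃ h ∈ σ.G, ∀ x, g (σ.f s x) = σ.f (gs s) (h x)
  a4 : ∀ s t : S, s ≠ t → (σ.Qw [s] ∩ σ.Qw [t]).Nonempty →
    (∃ i j : ℤ, σ.Qw [s] ∩ σ.Qw [t] = σ.f s '' edge J i ∧
        σ.f s '' edge J i = σ.f t '' edge J j ∧
        (σ.φ t)⁻¹ * σ.φ s * reflIso (2 * π * i / J) ∈ σ.G) ∨
    (∃ i j : ℤ, σ.Qw [s] ∩ σ.Qw [t] = {σ.f s (vertex J i)} ∧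
        σ.f s (vertex J i) = σ.f t (vertex J j))
  a5 : ∀ s t : S, ∃ p : List S, p.Chain' σ.E1ℓ ∧ p.head? = some s ∧ p.getLast? = some t

/-- `K` is the self-similar set (attractor) associated with the system. -/
def IsAttractor (σ : SSSystem J S) (K : Set ℂ) : Prop :=
  K.Nonempty ∧ IsCompact K ∧ K ⊆ polyQ J ∧ K = ⋃ s : S, σ.f s '' K

/-- `Q_n(x)`: the union of the level-`n` polygons whose cells contain `x`. -/
def Qn (σ : SSSystem J S) (K : Set ℂ) (n : ℕ) (x : ℂ) : Set ℂ :=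
  ⋃ w ∈ {w : List S | w.length = n ∧ x ∈ σ.Kw K w}, σ.Qw w

/-- There is no isolated contact point of cells. -/
def NoIsolatedContactPoint (σ : SSSystem J S) (K : Set ℂ) : Prop :=
  ∀ x ∈ K, ∀ n : ℕ, IsConnected (σ.Qn K n x \ {x})

end SSSystem

/- ===================== auxiliary lemmas ===================== -/

namespace S14

/-- `om J k = exp(2πik/J)`. -/
def om (J : ℕ) (k : ℤ) : ℂ := Complex.exp (↑(2 * π * k / J : ℝ) * Complex.I)

variable {J : ℕ}

lemma reflIso_apply (θ : ℝ) (z : ℂ) :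
    reflIso θ z = Complex.exp (↑(2*θ) * Complex.I) * (starRingEnd ℂ) z := by
  simp [reflIso, rotIso, LinearIsometryEquiv.coe_mul, Function.comp, rotation_apply,
    Circle.coe_exp]

lemma reflIso_invol (θ : ℝ) : reflIso θ * reflIso θ = 1 := by
  ext z
  simp only [LinearIsometryEquiv.coe_mul, Function.comp, LinearIsometryEquiv.coe_one, id,
    reflIso_apply]
  rw [map_mul, ← Complex.exp_conj]
  have : (starRingEnd ℂ) (↑(2*θ) * Complex.I) = -(↑(2*θ) * Complex.I) := by
    simp [Complex.ext_iff]
  rw [this, Complex.conj_conj, ← mul_assoc, ← Complex.exp_add]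
  simp

lemma reflIso_inv (θ : ℝ) : (reflIso θ)⁻¹ = reflIso θ :=
  inv_eq_of_mul_eq_one_right (reflIso_invol θ)

lemma cos_pj_pos (hJ : 3 ≤ J) : 0 < Real.cos (π / J) := by
  have h1 : 0 < π / J := by positivity
  have h2 : π / J < π / 2 := by
    apply div_lt_div_of_pos_left Real.pi_pos (by norm_num)
    exact_mod_cast by omega
  exact Real.cos_pos_of_mem_Ioo ⟨by linarith, h2⟩

lemma om_add (hJ : 3 ≤ J) (a b : ℤ) : om J (a + b) = om J a * om J b := by
  have hJ0 : (J : ℝ) ≠ 0 := by positivity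
  rw [om, om, om, ← Complex.exp_add, ← add_mul, ← Complex.ofReal_add]
  congr 2
  field_simp
  push_cast
  ring

lemma om_ne_zero (J : ℕ) (k : ℤ) : om J k ≠ 0 := Complex.exp_ne_zero _

lemma conj_om (J : ℕ) (k : ℤ) : (starRingEnd ℂ) (om J k) = om J (-k) := by
  rw [om, om, ← Complex.exp_conj]
  congr 1
  simp [Complex.ext_iff]
  ring

lemma im_om_one_pos (hJ : 3 ≤ J) : 0 < (om J 1).im := by
  rw [om, Complex.exp_ofReal_mul_I_im]
  have hJ3 : (3:ℝ) ≤ (J:ℝ) := by exact_mod_cast hJ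
  have h1 : 0 < 2 * π * ((1:ℤ):ℝ) / J := by positivity
  have h2 : 2 * π * ((1:ℤ):ℝ) / J < π := by
    rw [div_lt_iff₀ (by positivity)]
    push_cast
    nlinarith [Real.pi_pos]
  exact Real.sin_pos_of_pos_of_lt_pi h1 h2

lemma om_one_ne_one (hJ : 3 ≤ J) : om J 1 ≠ 1 := by
  intro h
  have := im_om_one_pos (J := J) hJ
  rw [h] at this
  simp at this

lemma om_mul_self (hJ : 3 ≤ J) (m : ℤ) : om J (J * m) = 1 := by
  have hJ0 : (J : ℂ) ≠ 0 := by
    simp only [ne_eq, Nat.cast_eq_zero]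
    omega
  rw [om]
  rw [show ((2 * π * (J * m : ℤ) / J : ℝ) : ℂ) * Complex.I = (m : ℤ) * (2 * π * Complex.I) by
    push_cast; field_simp]
  exact Complex.exp_int_mul_two_pi_mul_I m

lemma om_congr (hJ : 3 ≤ J) {a b : ℤ} (h : a % J = b % J) : om J a = om J b := by
  have hdvd : (J : ℤ) ∣ b - a := Int.ModEq.dvd h
  obtain ⟨m, hm⟩ := hdvd
  have : b = a + J * m := by linarith
  rw [this, om_add hJ, om_mul_self hJ, mul_one]

lemma LmI_ne_zero : (↑(Real.tan (π / J)) - Complex.I) ≠ 0 := by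
  intro h
  have := congrArg Complex.im h
  rw [Complex.sub_im, Complex.ofReal_im, Complex.I_im, Complex.zero_im] at this
  norm_num at this

lemma LpI_ne_zero : (↑(Real.tan (π / J)) + Complex.I) ≠ 0 := by
  intro h
  have := congrArg Complex.im h
  rw [Complex.add_im, Complex.ofReal_im, Complex.I_im, Complex.zero_im] at this
  norm_num at this

lemma vertex_eq (hJ : 3 ≤ J) (k : ℤ) :
    vertex J k = (↑(Real.tan (π / J)) - Complex.I) * om J k := by
  have hcos : Real.cos (π / J) ≠ 0 := ne_of_gt (cos_pj_pos hJ)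
  have hcos3 : Complex.cos ((π : ℂ) / J) ≠ 0 := by
    rw [show ((π : ℂ)/J) = ((π/J : ℝ) : ℂ) by push_cast; ring, ← Complex.ofReal_cos]
    exact_mod_cast hcos
  have hexp : ((π : ℂ) / J + 2 * π * k / J - π / 2) * Complex.I
      = (↑(π / J - π / 2 : ℝ)) * Complex.I + (↑(2 * π * k / J : ℝ)) * Complex.I := by
    push_cast; ring
  rw [vertex, hexp, Complex.exp_add, om, Complex.exp_mul_I, ← Complex.ofReal_cos,
    ← Complex.ofReal_sin, Real.cos_sub_pi_div_two, Real.sin_sub_pi_div_two,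
    Complex.real_smul, Real.tan_eq_sin_div_cos, ← mul_assoc]
  congr 1
  push_cast
  field_simp [hcos3]
  ring

lemma E3 (hJ : 3 ≤ J) :
    (↑(Real.tan (π / J)) + Complex.I) * om J 1 = -(↑(Real.tan (π / J)) - Complex.I) := by
  have hcos : Real.cos (π / J) ≠ 0 := ne_of_gt (cos_pj_pos hJ)
  have harg : (2 * π * ((1:ℤ):ℝ) / J : ℝ) = 2 * (π / J) := by push_cast; ring
  have hpyth := Real.sin_sq_add_cos_sq (π / J)
  set L := Real.tan (π / J) with hL
  have hre : L * Real.cos (2 * (π/J)) - Real.sin (2 * (π/J)) = -L := by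
    rw [hL, Real.tan_eq_sin_div_cos, Real.cos_two_mul, Real.sin_two_mul]
    field_simp
    ring
  have him : Real.cos (2 * (π/J)) + L * Real.sin (2 * (π/J)) = 1 := by
    rw [hL, Real.tan_eq_sin_div_cos, Real.cos_two_mul, Real.sin_two_mul]
    field_simp
    linear_combination 2 * hpyth
  rw [om, harg, Complex.exp_mul_I, ← Complex.ofReal_cos, ← Complex.ofReal_sin]
  calc (↑L + Complex.I) * (↑(Real.cos (2 * (π/J))) + ↑(Real.sin (2 * (π/J))) * Complex.I)
      = ↑(L * Real.cos (2 * (π/J)) - Real.sin (2 * (π/J)))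
        + ↑(Real.cos (2 * (π/J)) + L * Real.sin (2 * (π/J))) * Complex.I := by
          push_cast; ring_nf; rw [Complex.I_sq]; ring
    _ = ↑(-L) + ↑(1:ℝ) * Complex.I := by rw [hre, him]
    _ = -(↑L - Complex.I) := by push_cast; ring

/- segment endpoint extraction -/

lemma seg_coord {a b x : ℂ} (hab : a ≠ b) {α β : ℝ} (hsum : α + β = 1)
    (h : α • a + β • b = x) (hx : x = a) : β = 0 := by
  have h2 : β • (b - a) = 0 := by
    have hα : α = 1 - β := by linarith
    rw [hα] at h
    rw [hx] at h
    rw [smul_sub]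
    have := sub_eq_zero.2 h
    rw [← this]
    module
  rcases smul_eq_zero.1 h2 with h3 | h3
  · exact h3
  · exact absurd (sub_eq_zero.1 h3).symm hab

lemma segment_endpoints {a b c d : ℂ} (hab : a ≠ b)
    (h : segment ℝ a b = segment ℝ c d) :
    (a = c ∧ b = d) ∨ (a = d ∧ b = c) := by
  have hc : c ∈ segment ℝ a b := h ▸ left_mem_segment ℝ c d
  have hd : d ∈ segment ℝ a b := h ▸ right_mem_segment ℝ c d
  have ha : a ∈ segment ℝ c d := h ▸ left_mem_segment ℝ a b
  have hb : b ∈ segment ℝ c d := h ▸ right_mem_segment ℝ a b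
  obtain ⟨u₁, v₁, hu₁, hv₁, huv₁, hc'⟩ := hc
  obtain ⟨u₂, v₂, hu₂, hv₂, huv₂, hd'⟩ := hd
  obtain ⟨p, q, hp, hq, hpq, ha'⟩ := ha
  obtain ⟨p', q', hp', hq', hpq', hb'⟩ := hb
  have key : p • c + q • d = (p * u₁ + q * u₂) • a + (p * v₁ + q * v₂) • b := by
    rw [← hc', ← hd']; module
  have key' : p' • c + q' • d = (p' * u₁ + q' * u₂) • a + (p' * v₁ + q' * v₂) • b := by
    rw [← hc', ← hd']; module
  have haexp : (p * u₁ + q * u₂) • a + (p * v₁ + q * v₂) • b = a := key.symm.trans ha'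
  have hbexp : (p' * u₁ + q' * u₂) • a + (p' * v₁ + q' * v₂) • b = b := key'.symm.trans hb'
  have hA : p * v₁ + q * v₂ = 0 :=
    seg_coord hab (by nlinarith) haexp rfl
  have hB : p' * u₁ + q' * u₂ = 0 :=
    seg_coord hab.symm (by nlinarith)
      (x := b) (α := p' * v₁ + q' * v₂) (β := p' * u₁ + q' * u₂)
      (by rw [add_comm]; exact hbexp) rfl
  have hpv : p * v₁ = 0 ∧ q * v₂ = 0 := by
    constructor <;> nlinarith
  have hpu : p' * u₁ = 0 ∧ q' * u₂ = 0 := by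
    constructor <;> nlinarith
  by_cases hv₁0 : v₁ = 0
  · left
    have hu₁1 : u₁ = 1 := by linarith
    have hca : c = a := by rw [← hc', hv₁0, hu₁1]; module
    refine ⟨hca.symm, ?_⟩
    have hp'0 : p' = 0 := by have := hpu.1; rw [hu₁1] at this; linarith
    have hq'1 : q' = 1 := by linarith
    rw [← hb', hp'0, hq'1]; module
  · right
    have hp0 : p = 0 := by
      rcases mul_eq_zero.1 hpv.1 with h0 | h0
      · exact h0
      · exact absurd h0 hv₁0
    have hq1 : q = 1 := by linarith
    have had : a = d := by rw [← ha', hp0, hq1]; module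
    refine ⟨had, ?_⟩
    have hv₂0 : v₂ = 0 := by
      rcases mul_eq_zero.1 hpv.2 with h0 | h0
      · exfalso; rw [h0] at hq1; exact one_ne_zero hq1.symm
      · exact h0
    have hu₂1 : u₂ = 1 := by linarith
    have hq'0 : q' = 0 := by have := hpu.2; rw [hu₂1] at this; linarith
    have hp'1 : p' = 1 := by linarith
    rw [← hb', hq'0, hp'1]; module

/- polyQ facts -/

lemma edge_seg (hJ : 3 ≤ J) (i : ℤ) :
    edge J i = segment ℝ ((↑(Real.tan (π / J)) - Complex.I) * om J (i - 1))
      ((↑(Real.tan (π / J)) - Complex.I) * om J i) := by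
  rw [edge, vertex_eq hJ, vertex_eq hJ]

lemma zero_mem_polyQ (J : ℕ) : (0 : ℂ) ∈ polyQ J :=
  ⟨0, ⟨le_rfl, zero_le_one⟩, 0, vertex J 0, right_mem_segment ℝ _ _, (zero_smul ℝ _).symm⟩

lemma vertex_mem_polyQ (J : ℕ) (k : ℤ) : vertex J k ∈ polyQ J :=
  ⟨1, ⟨zero_le_one, le_rfl⟩, k, vertex J k, right_mem_segment ℝ _ _, (one_smul ℝ _).symm⟩

lemma vertex_ne_zero (hJ : 3 ≤ J) (k : ℤ) : vertex J k ≠ 0 := by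
  rw [vertex_eq hJ]
  exact mul_ne_zero LmI_ne_zero (om_ne_zero J k)

lemma edge_congr (hJ : 3 ≤ J) {a b : ℤ} (h : a % J = b % J) : edge J a = edge J b := by
  rw [edge_seg hJ, edge_seg hJ, om_congr hJ h, om_congr hJ (Int.ModEq.sub_right 1 h)]

lemma zero_notin_edge (hJ : 3 ≤ J) (i : ℤ) : (0 : ℂ) ∉ edge J i := by
  rw [edge_seg hJ]
  rintro ⟨p, q, hp, hq, hpq, h⟩
  set X := (↑(Real.tan (π / J)) - Complex.I) with hX
  have homi : om J i = om J (i - 1) * om J 1 := by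
    rw [← om_add hJ]; congr 1; ring
  have hfac : X * (p • om J (i-1) + q • om J i) = 0 := by
    rw [mul_add, mul_smul_comm, mul_smul_comm]
    exact h
  have h2 : p • om J (i-1) + q • om J i = 0 :=
    (mul_eq_zero.1 hfac).resolve_left LmI_ne_zero
  have h3 : om J (i - 1) * ((p:ℂ) + (q:ℂ) * om J 1) = 0 := by
    rw [← h2, homi]
    simp only [Complex.real_smul]
    ring
  have h4 : ((p:ℂ) + (q:ℂ) * om J 1) = 0 := by
    rcases mul_eq_zero.1 h3 with h0 | h0
    · exact absurd h0 (om_ne_zero J _)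
    · exact h0
  have him := congrArg Complex.im h4
  simp only [Complex.add_im, Complex.ofReal_im, Complex.mul_im,
    Complex.ofReal_re, Complex.zero_im, zero_add, zero_mul, add_zero] at him
  have hq0 : q = 0 := by
    have hpos := im_om_one_pos hJ
    rcases mul_eq_zero.1 him with h6 | h6
    · exact h6
    · linarith
  have hre := congrArg Complex.re h4
  rw [hq0] at hre
  simp at hre
  rw [hq0, hre] at hpq
  norm_num at hpq

lemma isCompact_segment' (a b : ℂ) : IsCompact (segment ℝ a b) := by
  rw [segment_eq_image]
  exact isCompact_Icc.image (by fun_prop)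

lemma polyQ_decomp (hJ : 3 ≤ J) :
    polyQ J = (fun p : ℝ × ℂ => p.1 • p.2) ''
      (Icc (0:ℝ) 1 ×ˢ ⋃ k ∈ Finset.range J, edge J (k : ℤ)) := by
  have hJ0 : (0:ℤ) < (J : ℤ) := by exact_mod_cast by omega
  ext z
  constructor
  · rintro ⟨t, ht, i, y, hy, rfl⟩
    refine ⟨(t, y), ⟨ht, ?_⟩, rfl⟩
    apply mem_biUnion (Finset.mem_range.2 ?_) ?_
    · exact (i % J).toNat
    · rw [← Int.ofNat_lt, Int.toNat_of_nonneg (Int.emod_nonneg i hJ0.ne')]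
      exact Int.emod_lt_of_pos i hJ0
    · rwa [edge_congr hJ (a := ((i % J).toNat : ℤ)) (b := i) (by
        rw [Int.toNat_of_nonneg (Int.emod_nonneg i hJ0.ne')]
        exact Int.emod_emod_of_dvd i dvd_rfl)]
  · rintro ⟨⟨t, y⟩, ⟨ht, hy⟩, rfl⟩
    obtain ⟨k, _, hk⟩ := mem_iUnion₂.1 hy
    exact ⟨t, ht, k, y, hk, rfl⟩

lemma isCompact_polyQ (hJ : 3 ≤ J) : IsCompact (polyQ J) := by
  rw [polyQ_decomp hJ]
  apply IsCompact.image
  · exact (isCompact_Icc.prod ((Finset.range J).finite_toSet.isCompact_biUnion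
      (fun k _ => isCompact_segment' _ _)))
  · exact continuous_fst.smul continuous_snd

end S14


namespace S14

variable {J : ℕ} {S : Type} [Fintype S]

/-- The inverse of the contraction `f s`. -/
def ginv (σ : SSSystem J S) (s : S) (y : ℂ) : ℂ := (σ.φ s).symm (σ.r⁻¹ • (y - σ.c s))

lemma f_ginv (σ : SSSystem J S) (s : S) (y : ℂ) : σ.f s (ginv σ s y) = y := by
  rw [SSSystem.f, ginv, LinearIsometryEquiv.apply_symm_apply, smul_smul,
    mul_inv_cancel₀ σ.hr0.ne', one_smul, sub_add_cancel]

lemma ginv_f (σ : SSSystem J S) (s : S) (x : ℂ) : ginv σ s (σ.f s x) = x := by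
  rw [SSSystem.f, ginv, add_sub_cancel_right, smul_smul, inv_mul_cancel₀ σ.hr0.ne', one_smul,
    LinearIsometryEquiv.symm_apply_apply]

lemma f_inj (σ : SSSystem J S) (s : S) {x x' : ℂ} (h : σ.f s x = σ.f s x') : x = x' := by
  have := congrArg (ginv σ s) h
  rwa [ginv_f, ginv_f] at this

lemma f_cont (σ : SSSystem J S) (s : S) : Continuous (σ.f s) := by
  unfold SSSystem.f
  exact ((σ.φ s).continuous.const_smul σ.r).add continuous_const

lemma dist_ginv (σ : SSSystem J S) (s : S) (y z : ℂ) :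
    dist (ginv σ s y) (ginv σ s z) = σ.r⁻¹ * dist y z := by
  rw [dist_eq_norm, dist_eq_norm, ginv, ginv, ← LinearIsometryEquiv.map_sub,
    LinearIsometryEquiv.norm_map, ← smul_sub]
  rw [norm_smul, Real.norm_eq_abs, abs_of_pos (inv_pos.2 σ.hr0)]
  congr 1
  abel_nf

lemma Qw_single (σ : SSSystem J S) (s : S) : σ.Qw [s] = σ.f s '' polyQ J := rfl

lemma Kw_single (σ : SSSystem J S) (K : Set ℂ) (s : S) : σ.Kw K [s] = σ.f s '' K := rfl

lemma image_affine_segment (R : Iso2) (v a b : ℂ) :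
    (fun z => R z + v) '' segment ℝ a b = segment ℝ (R a + v) (R b + v) := by
  have key : ∀ p q : ℝ, p + q = 1 → R (p • a + q • b) + v = p • (R a + v) + q • (R b + v) := by
    intro p q hpq
    rw [map_add, map_smul, map_smul, smul_add, smul_add]
    have hv : p • v + q • v = v := by rw [← add_smul, hpq, one_smul]
    rw [show p • R a + p • v + (q • R b + q • v) = p • R a + q • R b + (p • v + q • v) by abel,
      hv]
  ext z
  constructor
  · rintro ⟨w, ⟨p, q, hp, hq, hpq, rfl⟩, rfl⟩
    exact ⟨p, q, hp, hq, hpq, (key p q hpq).symm⟩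
  · rintro ⟨p, q, hp, hq, hpq, rfl⟩
    exact ⟨p • a + q • b, ⟨p, q, hp, hq, hpq, rfl⟩, key p q hpq⟩

lemma phi_rel (σ : SSSystem J S) (hGtriv : σ.G = ⊥) {s t : S} {θ : ℝ}
    (hmem : (σ.φ t)⁻¹ * σ.φ s * reflIso θ ∈ σ.G) (z : ℂ) :
    (σ.φ t).symm (σ.φ s z) = reflIso θ z := by
  rw [hGtriv, Subgroup.mem_bot] at hmem
  have h1 : (σ.φ t)⁻¹ * σ.φ s = (reflIso θ)⁻¹ := mul_eq_one_iff_eq_inv.1 hmem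
  rw [reflIso_inv] at h1
  have := congrArg (fun (e : Iso2) => e z) h1
  simpa using this

end S14


namespace S14

variable {J : ℕ} {S : Type} [Fintype S]

lemma conjX (L : ℝ) : (starRingEnd ℂ) (↑L - Complex.I) = ↑L + Complex.I := by
  rw [map_sub, Complex.conj_ofReal, Complex.conj_I]
  ring

lemma R_om (hJ : 3 ≤ J) (i : ℤ) (c : ℂ) (k : ℤ) :
    reflIso (2 * π * i / J) (c * om J k) = (starRingEnd ℂ) c * om J (2*i - k) := by
  have harg : ((2*(2*π*(i:ℝ)/J) : ℝ) : ℂ) = ((2*π*((2*i : ℤ):ℝ)/J : ℝ) : ℂ) := by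
    push_cast; ring
  rw [reflIso_apply, harg, map_mul, conj_om]
  have : Complex.exp (↑(2 * π * ((2*i : ℤ):ℝ) / ↑J : ℝ) * Complex.I) = om J (2*i) := rfl
  rw [this, show (2*i - k) = (2*i) + (-k) by ring, om_add hJ]
  ring

lemma edge_consist (hJ : 3 ≤ J) (σ : SSSystem J S) (hGtriv : σ.G = ⊥) {K : Set ℂ}
    (hKpoly : K ⊆ polyQ J) {s t : S} {i j : ℤ}
    (hQ : σ.Qw [s] ∩ σ.Qw [t] = σ.f s '' edge J i)
    (hE : σ.f s '' edge J i = σ.f t '' edge J j)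
    (hGm : (σ.φ t)⁻¹ * σ.φ s * reflIso (2 * π * i / J) ∈ σ.G)
    {y : ℂ} (hys : y ∈ σ.f s '' K) (hyt : y ∈ σ.f t '' K) :
    ginv σ s y = ginv σ t y := by
  set L : ℝ := Real.tan (π / J) with hL
  set X : ℂ := (↑L - Complex.I) with hX
  set R : Iso2 := reflIso (2 * π * i / J) with hRdef
  have hR : ∀ z, (σ.φ t).symm (σ.φ s z) = R z := phi_rel σ hGtriv hGm
  set v : ℂ := (σ.φ t).symm (σ.r⁻¹ • (σ.c s - σ.c t)) with hv
  have hh : ∀ z, ginv σ t (σ.f s z) = R z + v := by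
    intro z
    rw [ginv, SSSystem.f]
    have hsimp : σ.r⁻¹ • (σ.r • (σ.φ s) z + σ.c s - σ.c t)
        = (σ.φ s) z + σ.r⁻¹ • (σ.c s - σ.c t) := by
      rw [add_sub_assoc, smul_add, smul_smul, inv_mul_cancel₀ σ.hr0.ne', one_smul]
    rw [hsimp, map_add, hR]
  -- key algebraic facts
  have hE3 : (↑L + Complex.I) * om J 1 = -X := E3 hJ
  have h_i1 : om J (i+1) = om J i * om J 1 := om_add hJ i 1
  have h_j : om J j = om J (j-1) * om J 1 := by
    rw [← om_add hJ]; congr 1; ring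
  have h_im1 : om J i = om J (i-1) * om J 1 := by
    rw [← om_add hJ]; congr 1; ring
  have hRa : R (X * om J (i-1)) = (↑L + Complex.I) * om J (i+1) := by
    rw [hRdef, R_om hJ, hX, conjX]
    congr 2
    ring
  have hRb : R (X * om J i) = (↑L + Complex.I) * om J i := by
    rw [hRdef, R_om hJ, hX, conjX]
    congr 2
    ring
  -- the image of edge i under z ↦ R z + v is edge j
  have him : segment ℝ (R (X * om J (i-1)) + v) (R (X * om J i) + v)
      = segment ℝ (X * om J (j-1)) (X * om J j) := by
    calc segment ℝ (R (X * om J (i-1)) + v) (R (X * om J i) + v)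
        = (fun z => R z + v) '' segment ℝ (X * om J (i-1)) (X * om J i) :=
          (image_affine_segment R v _ _).symm
      _ = (fun z => R z + v) '' edge J i := by rw [← edge_seg hJ i]
      _ = (fun z => ginv σ t (σ.f s z)) '' edge J i :=
          (Set.image_congr (fun z _ => (hh z).symm))
      _ = ginv σ t '' (σ.f s '' edge J i) := (Set.image_image _ _ _).symm
      _ = ginv σ t '' (σ.f t '' edge J j) := by rw [hE]
      _ = edge J j := by
          rw [Set.image_image]
          simp only [ginv_f]
          exact Set.image_id _
      _ = segment ℝ (X * om J (j-1)) (X * om J j) := edge_seg hJ j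
  rw [hRa, hRb] at him
  have hab : (↑L + Complex.I) * om J (i+1) + v ≠ (↑L + Complex.I) * om J i + v := by
    intro heq
    have h1 : (↑L + Complex.I) * om J (i+1) = (↑L + Complex.I) * om J i :=
      add_right_cancel heq
    have h2 : om J (i+1) = om J i := mul_left_cancel₀ LpI_ne_zero h1
    rw [h_i1] at h2
    have h3 : om J 1 = 1 := by
      have := mul_left_cancel₀ (om_ne_zero J i) (h2.trans (mul_one _).symm)
      exact this
    exact om_one_ne_one hJ h3
  -- the point y pulled back lies on edge i
  have hyQ : y ∈ σ.f s '' edge J i := by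
    rw [← hQ]
    constructor
    · rw [Qw_single]
      exact Set.image_mono hKpoly hys
    · rw [Qw_single]
      exact Set.image_mono hKpoly hyt
  obtain ⟨x₁, hx₁, hfx₁⟩ := hyQ
  have hginvs : ginv σ s y = x₁ := by rw [← hfx₁, ginv_f]
  have hginvt : ginv σ t y = R x₁ + v := by rw [← hfx₁, hh]
  rcases segment_endpoints hab him with ⟨hA, hB⟩ | ⟨hA, hB⟩
  · -- case 1 : h fixes edge i pointwise
    have hvv : v = -2 * Complex.I * om J i := by
      -- first : (L+I) om i = -X om (j-1)
      have hstep : ((↑L + Complex.I) * om J i + X * om J (j-1)) * (om J 1 - 1) = 0 := by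
        linear_combination hA - hB - (↑L + Complex.I) * h_i1 - X * h_j
      have hsub : (↑L + Complex.I) * om J i + X * om J (j-1) = 0 :=
        (mul_eq_zero.1 hstep).resolve_right (sub_ne_zero.2 (om_one_ne_one hJ))
      -- om (j-1) = om (i-1)
      have h1 : (↑L + Complex.I) * om J i = -X * om J (i-1) := by
        linear_combination (↑L + Complex.I) * h_im1 + om J (i-1) * hE3
      have h2 : X * (om J (j-1) - om J (i-1)) = 0 := by
        linear_combination hsub - h1
      have h3 : om J (j-1) = om J (i-1) :=
        sub_eq_zero.1 ((mul_eq_zero.1 h2).resolve_left (by rw [hX]; exact LmI_ne_zero))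
      have homj : om J j = om J i := by rw [h_j, h3, ← h_im1]
      have hveq : v = X * om J j - (↑L + Complex.I) * om J i := by
        linear_combination hB
      rw [hveq, homj, hX]
      ring
    have hfix1 : (↑L + Complex.I) * om J (i+1) + v = X * om J (i-1) := by
      rw [hvv, hX]
      linear_combination (↑L + Complex.I) * h_i1
        + ((↑L + Complex.I) * om J 1 - 2*Complex.I) * h_im1
        + (om J (i-1) * (om J 1 - 1)) * hE3
    have hfix2 : (↑L + Complex.I) * om J i + v = X * om J i := by
      rw [hvv, hX]
      ring
    -- conclude: R x₁ + v = x₁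
    rw [hginvs, hginvt]
    have hx₁' : x₁ ∈ segment ℝ (X * om J (i-1)) (X * om J i) := by
      rw [← edge_seg hJ i]; exact hx₁
    obtain ⟨p, q, hp, hq, hpq, hx⟩ := hx₁'
    rw [← hx]
    rw [map_add, map_smul, map_smul, hRa, hRb]
    symm
    calc p • ((↑L + Complex.I) * om J (i+1)) + q • ((↑L + Complex.I) * om J i) + v
        = p • ((↑L + Complex.I) * om J (i+1) + v) + q • ((↑L + Complex.I) * om J i + v) := by
          have hv' : p • v + q • v = v := by rw [← add_smul, hpq, one_smul]
          rw [smul_add, smul_add]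
          rw [show p • ((↑L + Complex.I) * om J (i+1)) + p • v
              + (q • ((↑L + Complex.I) * om J i) + q • v)
              = p • ((↑L + Complex.I) * om J (i+1)) + q • ((↑L + Complex.I) * om J i)
                + (p • v + q • v) by abel, hv']
      _ = p • (X * om J (i-1)) + q • (X * om J i) := by rw [hfix1, hfix2]
  · -- case 2 : contradiction
    exfalso
    have hstep : ((↑L + Complex.I) * om J i - X * om J (j-1)) * (om J 1 - 1) = 0 := by
      linear_combination hA - hB - (↑L + Complex.I) * h_i1 + X * h_j
    have hsub : (↑L + Complex.I) * om J i = X * om J (j-1) := by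
      have := (mul_eq_zero.1 hstep).resolve_right (sub_ne_zero.2 (om_one_ne_one hJ))
      exact sub_eq_zero.1 this
    have hv0 : v = 0 := by linear_combination hB - hsub
    have h0 : ginv σ t (σ.f s 0) = 0 := by
      rw [hh, hv0, map_zero, add_zero]
    have hfs0 : σ.f s 0 = σ.f t 0 := by
      conv_lhs => rw [← f_ginv σ t (σ.f s 0)]
      rw [h0]
    have hmem0 : σ.f s 0 ∈ σ.Qw [s] ∩ σ.Qw [t] := by
      constructor
      · rw [Qw_single]; exact ⟨0, zero_mem_polyQ J, rfl⟩
      · rw [Qw_single]; exact ⟨0, zero_mem_polyQ J, hfs0.symm⟩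
    rw [hQ] at hmem0
    obtain ⟨x₀, hx₀, hfx₀⟩ := hmem0
    have : x₀ = 0 := f_inj σ s hfx₀
    rw [this] at hx₀
    exact zero_notin_edge hJ i hx₀

end S14


namespace S14

variable {J : ℕ} {S : Type} [Fintype S]

lemma consist (hJ : 3 ≤ J) (σ : SSSystem J S) (hax : σ.Axioms) (hGtriv : σ.G = ⊥)
    (K : Set ℂ) (hK : σ.IsAttractor K) (hnoiso : σ.NoIsolatedContactPoint K)
    {y : ℂ} (s t : S) (hys : y ∈ σ.f s '' K) (hyt : y ∈ σ.f t '' K) :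
    ginv σ s y = ginv σ t y := by
  obtain ⟨hKne, hKcomp, hKpoly, hKeq⟩ := hK
  have hy : y ∈ K := by rw [hKeq]; exact Set.mem_iUnion.2 ⟨s, hys⟩
  set A : Set S := {u | y ∈ σ.f u '' K} with hA
  set Rel : S → S → Prop := fun u v => u ∈ A ∧ v ∈ A ∧
    ((σ.f u '' polyQ J ∩ σ.f v '' polyQ J) \ {y}).Nonempty with hRel
  have hstep : ∀ u v, Rel u v → ginv σ u y = ginv σ v y := by
    rintro u v ⟨hu, hv, ⟨z, hz, hzy'⟩⟩
    have hzy : z ≠ y := fun h => hzy' (by rw [h]; exact rfl)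
    by_cases huv : u = v
    · rw [huv]
    · have hne : (σ.Qw [u] ∩ σ.Qw [v]).Nonempty :=
        ⟨z, by rw [Qw_single, Qw_single]; exact hz⟩
      rcases hax.a4 u v huv hne with ⟨i, j, hQ, hE, hGm⟩ | ⟨i, j, hQ, hptv⟩
      · exact edge_consist hJ σ hGtriv hKpoly hQ hE hGm hu hv
      · exfalso
        have hyQ : y ∈ σ.Qw [u] ∩ σ.Qw [v] :=
          ⟨by rw [Qw_single]; exact Set.image_mono hKpoly hu,
           by rw [Qw_single]; exact Set.image_mono hKpoly hv⟩
        have hzQ : z ∈ σ.Qw [u] ∩ σ.Qw [v] := by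
          rw [Set.mem_inter_iff, Qw_single, Qw_single]; exact hz
        rw [hQ, Set.mem_singleton_iff] at hyQ hzQ
        exact hzy (hzQ.trans hyQ.symm)
  have hQn : σ.Qn K 1 y = ⋃ u ∈ A, σ.f u '' polyQ J := by
    ext z
    constructor
    · intro h
      obtain ⟨w, hw, hz⟩ := Set.mem_iUnion₂.1 h
      obtain ⟨u, rfl⟩ := List.length_eq_one_iff.1 hw.1
      exact Set.mem_iUnion₂.2 ⟨u, hw.2, hz⟩
    · intro h
      obtain ⟨u, hu, hz⟩ := Set.mem_iUnion₂.1 h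
      exact Set.mem_iUnion₂.2 ⟨[u], ⟨rfl, hu⟩, hz⟩
  set C : Set S := {u | u ∈ A ∧ Relation.ReflTransGen Rel s u} with hC
  have hclosedcell : ∀ u : S, IsClosed (σ.f u '' polyQ J) := fun u =>
    ((isCompact_polyQ hJ).image (f_cont σ u)).isClosed
  set YC := ⋃ u ∈ C, σ.f u '' polyQ J with hYC
  set YD := ⋃ u ∈ A \ C, σ.f u '' polyQ J with hYD
  have hYCc : IsClosed YC := Set.Finite.isClosed_biUnion (Set.toFinite C)
    (fun u _ => hclosedcell u)
  have hYDc : IsClosed YD := Set.Finite.isClosed_biUnion (Set.toFinite (A \ C))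
    (fun u _ => hclosedcell u)
  have hconn := hnoiso y hy 1
  rw [hQn] at hconn
  set W := (⋃ u ∈ A, σ.f u '' polyQ J) \ {y} with hW
  have hsA : s ∈ A := hys
  have htA : t ∈ A := hyt
  have hsC : s ∈ C := ⟨hsA, Relation.ReflTransGen.refl⟩
  have hCnotD : ∀ u, u ∈ C → ∀ z, z ∈ σ.f u '' polyQ J → z ≠ y → z ∉ YD := by
    intro u hu z hzu hzy hzD
    obtain ⟨v, hvD, hzv⟩ := Set.mem_iUnion₂.1 hzD
    exact hvD.2 ⟨hvD.1, hu.2.tail ⟨hu.1, hvD.1, ⟨z, ⟨hzu, hzv⟩, by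
      simpa using hzy⟩⟩⟩
  have hdisj : ∀ z ∈ W, z ∈ YC → z ∈ YD → False := by
    intro z hzW hzC hzD
    obtain ⟨u, huC, hzu⟩ := Set.mem_iUnion₂.1 hzC
    exact hCnotD u huC z hzu (fun h => hzW.2 (by rw [h]; exact rfl)) hzD
  have hWsub : W ⊆ YDᶜ ∪ YCᶜ := by
    intro z hzW
    by_cases hzC : z ∈ YC
    · exact Or.inl (fun hzD => hdisj z hzW hzC hzD)
    · exact Or.inr hzC
  have htwo : ∀ u : S, ∃ z ∈ σ.f u '' polyQ J, z ≠ y := by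
    intro u
    by_cases h0 : σ.f u 0 = y
    · refine ⟨σ.f u (vertex J 0), ⟨vertex J 0, vertex_mem_polyQ J 0, rfl⟩, ?_⟩
      rw [← h0]
      intro heq
      exact vertex_ne_zero hJ 0 (f_inj σ u heq)
    · exact ⟨σ.f u 0, ⟨0, zero_mem_polyQ J, rfl⟩, h0⟩
  obtain ⟨zs, hzs, hzsy⟩ := htwo s
  have hzsW : zs ∈ W := ⟨Set.mem_iUnion₂.2 ⟨s, hsA, hzs⟩, by simpa using hzsy⟩
  have h1 : (W ∩ YDᶜ).Nonempty := ⟨zs, hzsW, hCnotD s hsC zs hzs hzsy⟩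
  have hWYC : W ⊆ YC := by
    by_contra hnot
    obtain ⟨z0, hz0W, hz0C⟩ := Set.not_subset.1 hnot
    obtain ⟨z1, hz1W, hz1⟩ := hconn.isPreconnected _ _ hYDc.isOpen_compl
      hYCc.isOpen_compl hWsub h1 ⟨z0, hz0W, hz0C⟩
    have hz1mem : z1 ∈ YC ∪ YD := by
      obtain ⟨u, huA, hz1u⟩ := Set.mem_iUnion₂.1 hz1W.1
      by_cases huC : u ∈ C
      · exact Or.inl (Set.mem_iUnion₂.2 ⟨u, huC, hz1u⟩)
      · exact Or.inr (Set.mem_iUnion₂.2 ⟨u, ⟨huA, huC⟩, hz1u⟩)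
    rcases hz1mem with h | h
    · exact hz1.2 h
    · exact hz1.1 h
  obtain ⟨zt, hzt, hzty⟩ := htwo t
  have hztW : zt ∈ W := ⟨Set.mem_iUnion₂.2 ⟨t, htA, hzt⟩, by simpa using hzty⟩
  obtain ⟨u, huC, hztu⟩ := Set.mem_iUnion₂.1 (hWYC hztW)
  have htC : Relation.ReflTransGen Rel s t :=
    huC.2.tail ⟨huC.1, htA, ⟨zt, ⟨hztu, hzt⟩, by simpa using hzty⟩⟩
  have hind : ∀ u, Relation.ReflTransGen Rel s u → ginv σ s y = ginv σ u y := by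
    intro u h
    induction h with
    | refl => rfl
    | tail h1 h2 ih => exact ih.trans (hstep _ _ h2)
  exact hind t htC

end S14


/-- Proposition 10.2-(1): for a `(J,{I})`-self-similar system with no
isolated contact point of cells, there is a continuous folding map `ψ : K → K` with
`ψ|_{K_s} = (f_s|_K)⁻¹` for every `s ∈ S`. -/
theorem statement14 (J : ℕ) (hJ : 3 ≤ J) (S : Type) [Fintype S]
    (σ : SSSystem J S) (hax : σ.Axioms) (hGtriv : σ.G = ⊥)
    (K : Set ℂ) (hK : σ.IsAttractor K) (hnoiso : σ.NoIsolatedContactPoint K) :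
    ∃ ψ : ℂ → ℂ, ContinuousOn ψ K ∧ MapsTo ψ K K ∧
      ∀ s : S, ∀ y ∈ σ.f s '' K, σ.f s (ψ y) = y := by
  classical
  set Φ : ℂ → ℂ := fun y =>
    if h : ∃ u : S, y ∈ σ.f u '' K then S14.ginv σ h.choose y else y with hΦ
  have hkey : ∀ (y : ℂ) (u : S), y ∈ σ.f u '' K → Φ y = S14.ginv σ u y := by
    intro y u hyu
    have hex : ∃ u : S, y ∈ σ.f u '' K := ⟨u, hyu⟩
    have h1 : Φ y = S14.ginv σ hex.choose y := by
      rw [hΦ]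
      exact dif_pos hex
    rw [h1]
    exact S14.consist hJ σ hax hGtriv K hK hnoiso hex.choose u hex.choose_spec hyu
  have hceq : ∀ y ∈ K, ∃ u : S, y ∈ σ.f u '' K := by
    intro y hyK
    exact Set.mem_iUnion.1 (hK.2.2.2 ▸ hyK)
  refine ⟨Φ, ?_, ?_, ?_⟩
  · -- continuity
    intro y hyK
    obtain ⟨u₀, hyu₀⟩ := hceq y hyK
    set A : Set S := {u | y ∈ σ.f u '' K} with hA
    set U : Set ℂ := ⋂ u ∈ {u : S | u ∉ A}, (σ.f u '' K)ᶜ with hU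
    have hUopen : IsOpen U := Set.Finite.isOpen_biInter (Set.toFinite _)
      (fun u _ => (hK.2.1.image (S14.f_cont σ u)).isClosed.isOpen_compl)
    have hyU : y ∈ U := Set.mem_iInter₂.2 (fun u hu => hu)
    obtain ⟨δ₀, hδ₀, hball⟩ := Metric.isOpen_iff.1 hUopen y hyU
    apply Metric.continuousWithinAt_iff.2
    intro ε hε
    refine ⟨min δ₀ (σ.r * ε), lt_min hδ₀ (mul_pos σ.hr0 hε), ?_⟩
    intro z hzK hdist
    have hzU : z ∈ U := hball (Metric.mem_ball.2 (lt_of_lt_of_le hdist (min_le_left _ _)))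
    obtain ⟨u, hzu⟩ := hceq z hzK
    have huA : u ∈ A := by
      by_contra huA
      exact (Set.mem_iInter₂.1 hzU u huA) hzu
    rw [hkey z u hzu, hkey y u huA, S14.dist_ginv]
    calc σ.r⁻¹ * dist z y < σ.r⁻¹ * (σ.r * ε) :=
          mul_lt_mul_of_pos_left (lt_of_lt_of_le hdist (min_le_right _ _)) (inv_pos.2 σ.hr0)
      _ = ε := by
          rw [← mul_assoc, inv_mul_cancel₀ σ.hr0.ne', one_mul]
  · -- maps to
    intro y hyK
    obtain ⟨u, hyu⟩ := hceq y hyK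
    rw [hkey y u hyu]
    obtain ⟨x, hxK, hfx⟩ := hyu
    rw [← hfx, S14.ginv_f]
    exact hxK
  · intro s y hy
    rw [hkey y s hy, S14.f_ginv]
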